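/- Fix Λ > 0. For λ ≥ 5, the kernel of the linear map D(λ) : ℝ × ℝ³' × ℝ × S → ℝ × ℝ³' given by D(λ)(u_NN, u_NT, u_TT1, u_TT0) = ((1/2)(λ-6)·u_NN + (3/2)(λ-2)·u_TT1, (λ-4)·u_NT) equals the image of the linear map L(λ)(u_NN, u_NT, u_TT1, u_TT0) = (3(λ-2)·u_NN + 3λ(2-λ)·u_TT1, 0, (6-λ)·u_NN + λ(λ-6)·u_TT1, λ(λ-3)·u_TT0), where S denotes the space of trace-free symmetric tangential 2-tensors and ℝ³' the space of tangential covectors at a point. -/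

import Mathlib

/-- Pointwise exactness, for `λ ≥ 5`, of the indicial families
`D(λ) = (3/Λ)·I(δ_g G_g, λ)` and `L(λ) = (3/Λ)·I(L_{0,g_dS,0}, λ)` in the refined splitting
`(u_NN, u_NT, u_TT1, u_TT0) ∈ ℝ × T' × ℝ × S` (`T'` tangential covectors, `S` trace-free
symmetric tangential 2-tensors): `ker D(λ) = range L(λ)`. -/
theorem stmt_18 (lam : ℝ) (hlam : 5 ≤ lam) {T' S : Type*}
    [AddCommGroup T'] [Module ℝ T'] [AddCommGroup S] [Module ℝ S] :
    {u : ℝ × T' × ℝ × S |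
        (1 / 2) * (lam - 6) * u.1 + (3 / 2) * (lam - 2) * u.2.2.1 = 0 ∧
        (lam - 4) • u.2.1 = 0}
      = Set.range (fun u : ℝ × T' × ℝ × S =>
          ((3 * (lam - 2) * u.1 + 3 * lam * (2 - lam) * u.2.2.1,
            (0 : T'),
            (6 - lam) * u.1 + lam * (lam - 6) * u.2.2.1,
            (lam * (lam - 3)) • u.2.2.2) : ℝ × T' × ℝ × S)) := by
  have h2 : lam - 2 ≠ 0 := by linarith
  have h4 : lam - 4 ≠ 0 := by linarith
  have hls : lam * (lam - 3) ≠ 0 := by nlinarith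
  ext ⟨a, t, c, s⟩
  simp only [Set.mem_setOf_eq, Set.mem_range, Prod.mk.injEq, Prod.ext_iff]
  constructor
  · rintro ⟨h1, ht⟩
    have ht0 : t = 0 := by
      have := smul_eq_zero.mp ht
      tauto
    refine ⟨(a / (3 * (lam - 2)), 0, 0, (lam * (lam - 3))⁻¹ • s), ?_, ht0.symm, ?_, ?_⟩
    · field_simp
      ring
    · have hc : (lam - 6) * a + 3 * (lam - 2) * c = 0 := by linarith
      field_simp
      linarith [hc]
    · rw [smul_smul, mul_inv_cancel₀ hls, one_smul]
  · rintro ⟨⟨u, v, w, z⟩, ha, ht, hc, hs⟩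
    refine ⟨?_, ?_⟩
    · rw [← ha, ← hc]; ring
    · rw [← ht, smul_zero]
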